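/- (Proposition 5, existence, uniqueness and local stability) Assume r > m and β > cIS, and set S1 = (r − m)/cSS, A = (m + γ + μ)/(β − cIS). If S1 > A, then the reduced system possesses exactly one equilibrium (S₊, I₊) with S₊ > 0 and I₊ > 0, and this interior equilibrium is locally asymptotically stable: for every ε > 0 there exists δ > 0 such that every solution starting within distance δ of (S₊, I₊) remains within distance ε of (S₊, I₊) for all t ≥ 0, and there exists δ₀ > 0 such that every solution starting within distance δ₀ of (S₊, I₊) converges to (S₊, I₊) as t → ∞. -/

import Mathlib

open Filter Topology

set_option maxHeartbeats 1000000

/-- `(S, I)` is a solution of the reduced system on `[0, ∞)`. -/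
def IsSol (r m β γ μ cSS cSI cIS cII a : ℝ) (S I : ℝ → ℝ) : Prop :=
  ∀ t : ℝ, 0 ≤ t →
    HasDerivAt S (r * S t + a * r * I t - m * S t
      - (cSS * S t + cSI * I t) * S t - β * S t * I t + γ * I t) t ∧
    HasDerivAt I (-(m * I t) - (cIS * S t + cII * I t) * I t
      + β * S t * I t - γ * I t - μ * I t) t

/-- `(s, i)` is an equilibrium point of the reduced system. -/
def IsEquilibrium (r m β γ μ cSS cSI cIS cII a : ℝ) (s i : ℝ) : Prop :=
  r * s + a * r * i - m * s - (cSS * s + cSI * i) * s - β * s * i + γ * i = 0 ∧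
  -(m * i) - (cIS * s + cII * i) * i + β * s * i - γ * i - μ * i = 0

/-- All parameters are positive and `a ∈ (0, 1)`. -/
def ParamsPos (r m β γ μ cSS cSI cIS cII a : ℝ) : Prop :=
  0 < r ∧ 0 < m ∧ 0 < β ∧ 0 < γ ∧ 0 < μ ∧
    0 < cSS ∧ 0 < cSI ∧ 0 < cIS ∧ 0 < cII ∧ 0 < a ∧ a < 1


lemma quad_lower (p q s u v : ℝ) (hp : 0 < p) (hs : 0 < s) :
    (p*s - q^2)/(p+s)*(u^2+v^2) ≤ p*u^2 + 2*q*(u*v) + s*v^2 := by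
  have hps : 0 < p + s := by linarith
  rw [div_mul_eq_mul_div, div_le_iff₀ hps]
  nlinarith [sq_nonneg (p*u+q*v), sq_nonneg (q*u+s*v)]

lemma quad_upper (p q s u v : ℝ) (hp : 0 < p) (hs : 0 < s) :
    p*u^2 + 2*q*(u*v) + s*v^2 ≤ (p+s+q^2+1)*(u^2+v^2) := by
  nlinarith [sq_nonneg (q*u - v), mul_nonneg hp.le (sq_nonneg v),
    mul_nonneg hs.le (sq_nonneg u), mul_nonneg (sq_nonneg q) (sq_nonneg v), sq_nonneg u, sq_nonneg v]

-- Lyapunov quadratic identity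
lemma lyap_id (a11 a12 a21 a22 u v : ℝ) (hτ : a11 + a22 < 0)
    (hΔ : 0 < a11*a22 - a12*a21) :
    2*((a22^2+(a11*a22-a12*a21)+a21^2)/(-(2*(a11*a22-a12*a21)*(a11+a22)))*u
        + (a12*(a22^2+(a11*a22-a12*a21)+a21^2)+a21*(a11^2+(a11*a22-a12*a21)+a12^2))/(2*(a11*a22-a12*a21)*(a11+a22)^2)*v)*(a11*u+a12*v)
      + 2*((a12*(a22^2+(a11*a22-a12*a21)+a21^2)+a21*(a11^2+(a11*a22-a12*a21)+a12^2))/(2*(a11*a22-a12*a21)*(a11+a22)^2)*u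
        + (a11^2+(a11*a22-a12*a21)+a12^2)/(-(2*(a11*a22-a12*a21)*(a11+a22)))*v)*(a21*u+a22*v)
      = -(u^2+v^2) := by
  have h1 : a11 + a22 ≠ 0 := ne_of_lt hτ
  have h2 : a11*a22 - a12*a21 ≠ 0 := ne_of_gt hΔ
  have h3 : a22*a11 - a12*a21 ≠ 0 := by rwa [mul_comm a22]
  field_simp
  ring

lemma detP_id (a11 a12 a21 a22 : ℝ) :
    (a22^2+(a11*a22-a12*a21)+a21^2)*(a11^2+(a11*a22-a12*a21)+a12^2)*(a11+a22)^2
      - (a12*(a22^2+(a11*a22-a12*a21)+a21^2)+a21*(a11^2+(a11*a22-a12*a21)+a12^2))^2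
      = (a11*a22-a12*a21)*(a11+a22)^2*((a11+a22)^2+(a12-a21)^2) := by
  ring

lemma abs_mul_le_sq (u v : ℝ) : |u*v| ≤ u^2 + v^2 := by
  rw [abs_mul]
  nlinarith [sq_nonneg (|u| - |v|), sq_abs u, sq_abs v, abs_nonneg u, abs_nonneg v,
    mul_nonneg (abs_nonneg u) (abs_nonneg v)]

lemma cubic_bound (p q s cSS cSI β cIS cII ρ u v : ℝ)
    (hp : 0 < p) (hs : 0 < s) (hcSS : 0 < cSS) (hcSI : 0 < cSI) (hβ : 0 < β)
    (hcIS : 0 < cIS) (hβc : cIS < β) (hcII : 0 < cII) (hρ : 0 < ρ)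
    (hM : ρ * (2*((p + |q|)*(cSS+(cSI+β)) + (|q| + s)*(β+cII))) ≤ 1/2)
    (huv : u^2 + v^2 ≤ ρ^2) :
    2*(p*u+q*v)*(-(cSS*u^2) - (cSI+β)*(u*v)) + 2*(q*u+s*v)*((β-cIS)*(u*v) - cII*v^2)
      ≤ 1/2*(u^2+v^2) := by
  have hu2 : u^2 ≤ ρ^2 := by nlinarith [sq_nonneg v]
  have hv2 : v^2 ≤ ρ^2 := by nlinarith [sq_nonneg u]
  have habsu : |u| ≤ ρ := by
    have := Real.sqrt_le_sqrt hu2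
    rwa [Real.sqrt_sq_eq_abs, Real.sqrt_sq hρ.le] at this
  have habsv : |v| ≤ ρ := by
    have := Real.sqrt_le_sqrt hv2
    rwa [Real.sqrt_sq_eq_abs, Real.sqrt_sq hρ.le] at this
  have h1 : |p*u+q*v| ≤ (p + |q|)*ρ := by
    calc |p*u+q*v| ≤ |p*u| + |q*v| := abs_add_le _ _
      _ = p * |u| + |q| * |v| := by rw [abs_mul, abs_mul, abs_of_pos hp]
      _ ≤ p*ρ + |q| * ρ := add_le_add (mul_le_mul_of_nonneg_left habsu hp.le)
            (mul_le_mul_of_nonneg_left habsv (abs_nonneg q))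
      _ = (p + |q|)*ρ := by ring
  have h2 : |q*u+s*v| ≤ (|q| + s)*ρ := by
    calc |q*u+s*v| ≤ |q*u| + |s*v| := abs_add_le _ _
      _ = |q| * |u| + s * |v| := by rw [abs_mul, abs_mul, abs_of_pos hs]
      _ ≤ |q| * ρ + s*ρ := add_le_add (mul_le_mul_of_nonneg_left habsu (abs_nonneg q))
            (mul_le_mul_of_nonneg_left habsv hs.le)
      _ = (|q| + s)*ρ := by ring
  have h3 : |(-(cSS*u^2) - (cSI+β)*(u*v))| ≤ (cSS+(cSI+β))*(u^2+v^2) := by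
    have he : -(cSS*u^2) - (cSI+β)*(u*v) = -(cSS*u^2 + (cSI+β)*(u*v)) := by ring
    rw [he, abs_neg]
    calc |cSS*u^2 + (cSI+β)*(u*v)| ≤ |cSS*u^2| + |(cSI+β)*(u*v)| := abs_add_le _ _
      _ = cSS*u^2 + (cSI+β) * |u*v| := by
          rw [abs_mul, abs_mul, abs_of_pos hcSS, abs_of_pos (by linarith : (0:ℝ) < cSI+β),
            abs_of_nonneg (sq_nonneg u)]
      _ ≤ cSS*(u^2+v^2) + (cSI+β)*(u^2+v^2) :=
          add_le_add (mul_le_mul_of_nonneg_left (by nlinarith [sq_nonneg v]) hcSS.le)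
            (mul_le_mul_of_nonneg_left (abs_mul_le_sq u v) (by linarith))
      _ = (cSS+(cSI+β))*(u^2+v^2) := by ring
  have h4 : |((β-cIS)*(u*v) - cII*v^2)| ≤ (β+cII)*(u^2+v^2) := by
    calc |((β-cIS)*(u*v) - cII*v^2)| ≤ |(β-cIS)*(u*v)| + |cII*v^2| := abs_sub _ _
      _ = (β-cIS) * |u*v| + cII*v^2 := by
          rw [abs_mul (β-cIS) (u*v), abs_mul cII (v^2),
            abs_of_pos (by linarith : (0:ℝ) < β - cIS), abs_of_pos hcII,
            abs_of_nonneg (sq_nonneg v)]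
      _ ≤ β*(u^2+v^2) + cII*(u^2+v^2) := by
          apply add_le_add
          · calc (β-cIS) * |u*v| ≤ (β-cIS)*(u^2+v^2) :=
                  mul_le_mul_of_nonneg_left (abs_mul_le_sq u v) (by linarith)
              _ ≤ β*(u^2+v^2) := by nlinarith [sq_nonneg u, sq_nonneg v]
          · exact mul_le_mul_of_nonneg_left (by nlinarith [sq_nonneg u]) hcII.le
      _ = (β+cII)*(u^2+v^2) := by ring
  have key : ∀ (P Q BP BQ : ℝ), |P| ≤ BP → |Q| ≤ BQ → 0 ≤ BP → 2*P*Q ≤ 2*(BP*BQ) := by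
    intro P Q BP BQ hP hQ hBP
    have h0Q : 0 ≤ BQ := le_trans (abs_nonneg _) hQ
    calc 2*P*Q ≤ |2*P*Q| := le_abs_self _
      _ = 2*(|P| * |Q|) := by rw [abs_mul, abs_mul]; simp [abs_of_nonneg]; ring
      _ ≤ 2*(BP*BQ) := by
          apply mul_le_mul_of_nonneg_left _ (by norm_num)
          exact mul_le_mul hP hQ (abs_nonneg _) hBP
  have t1 := key _ _ _ _ h1 h3 (by positivity)
  have t2 := key _ _ _ _ h2 h4 (by positivity)
  have hn2 : 0 ≤ u^2+v^2 := by positivity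
  calc 2*(p*u+q*v)*(-(cSS*u^2) - (cSI+β)*(u*v)) + 2*(q*u+s*v)*((β-cIS)*(u*v) - cII*v^2)
      ≤ 2*(((p + |q|)*ρ)*((cSS+(cSI+β))*(u^2+v^2)))
        + 2*(((|q| + s)*ρ)*((β+cII)*(u^2+v^2))) := add_le_add t1 t2
    _ = (ρ * (2*((p + |q|)*(cSS+(cSI+β)) + (|q| + s)*(β+cII)))) * (u^2+v^2) := by ring
    _ ≤ 1/2*(u^2+v^2) := mul_le_mul_of_nonneg_right hM hn2



lemma hasDerivAt_W (pC qC sC Sp Ip : ℝ) (S I : ℝ → ℝ) (e1 e2 : ℝ) (t : ℝ)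
    (hS : HasDerivAt S e1 t) (hI : HasDerivAt I e2 t) :
    HasDerivAt (fun τ => pC*(S τ - Sp)^2 + 2*qC*((S τ - Sp)*(I τ - Ip)) + sC*(I τ - Ip)^2)
      (2*(pC*(S t - Sp)+qC*(I t - Ip))*e1 + 2*(qC*(S t - Sp)+sC*(I t - Ip))*e2) t := by
  have hu : HasDerivAt (fun τ => S τ - Sp) e1 t := hS.sub_const Sp
  have hv : HasDerivAt (fun τ => I τ - Ip) e2 t := hI.sub_const Ip
  have h1 : HasDerivAt (fun τ => (S τ - Sp)^2) (2*(S t - Sp)*e1) t := by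
    simpa [mul_comm, mul_assoc] using hu.fun_pow 2
  have h2 : HasDerivAt (fun τ => (S τ - Sp)*(I τ - Ip))
      (e1*(I t - Ip) + (S t - Sp)*e2) t := hu.mul hv
  have h3 : HasDerivAt (fun τ => (I τ - Ip)^2) (2*(I t - Ip)*e2) t := by
    simpa [mul_comm, mul_assoc] using hv.fun_pow 2
  have := ((h1.const_mul pC).add (h2.const_mul (2*qC))).add (h3.const_mul sC)
  convert this using 1
  · rfl
  · rfl
  · rfl
  · ring

lemma master (r m β γ μ cSS cSI cIS cII a : ℝ) (Sp Ip a11 a12 a21 a22 pC qC sC ρ : ℝ)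
    (hcSS : 0 < cSS) (hcSI : 0 < cSI) (hβ : 0 < β) (hcIS : 0 < cIS) (hβc : cIS < β)
    (hcII : 0 < cII)
    (hpC : 0 < pC) (hsC : 0 < sC) (hq2 : qC^2 < pC*sC) (hρ : 0 < ρ)
    (hshift1 : ∀ Sx Ix : ℝ, r*Sx + a*r*Ix - m*Sx - (cSS*Sx + cSI*Ix)*Sx - β*Sx*Ix + γ*Ix
        = a11*(Sx-Sp) + a12*(Ix-Ip)
          + (-(cSS*(Sx-Sp)^2) - (cSI+β)*((Sx-Sp)*(Ix-Ip))))
    (hshift2 : ∀ Sx Ix : ℝ, -(m*Ix) - (cIS*Sx + cII*Ix)*Ix + β*Sx*Ix - γ*Ix - μ*Ix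
        = a21*(Sx-Sp) + a22*(Ix-Ip)
          + ((β-cIS)*((Sx-Sp)*(Ix-Ip)) - cII*(Ix-Ip)^2))
    (hlyap : ∀ u v : ℝ, 2*(pC*u+qC*v)*(a11*u+a12*v) + 2*(qC*u+sC*v)*(a21*u+a22*v)
        = -(u^2+v^2))
    (hMρ : ρ * (2*((pC + |qC|)*(cSS+(cSI+β)) + (|qC| + sC)*(β+cII))) ≤ 1/2) :
    (∀ ε : ℝ, 0 < ε → ∃ δ : ℝ, 0 < δ ∧
        ∀ S I : ℝ → ℝ, IsSol r m β γ μ cSS cSI cIS cII a S I →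
          dist ((S 0, I 0) : ℝ × ℝ) (Sp, Ip) < δ →
          ∀ t : ℝ, 0 ≤ t → dist ((S t, I t) : ℝ × ℝ) (Sp, Ip) < ε) ∧
      (∃ δ₀ : ℝ, 0 < δ₀ ∧
        ∀ S I : ℝ → ℝ, IsSol r m β γ μ cSS cSI cIS cII a S I →
          dist ((S 0, I 0) : ℝ × ℝ) (Sp, Ip) < δ₀ →
          Tendsto (fun t => (S t, I t)) atTop (𝓝 ((Sp, Ip) : ℝ × ℝ))) := by
  obtain ⟨alpha, halpha_def⟩ : ∃ x : ℝ, x = (pC*sC - qC^2)/(pC+sC) := ⟨_, rfl⟩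
  obtain ⟨Lam, hLam_def⟩ : ∃ x : ℝ, x = pC+sC+qC^2+1 := ⟨_, rfl⟩
  obtain ⟨cc, hcc_def⟩ : ∃ x : ℝ, x = 1/(2*Lam) := ⟨_, rfl⟩
  have hαpos : 0 < alpha := by
    rw [halpha_def]; exact div_pos (by linarith) (by linarith)
  have hΛpos : 0 < Lam := by rw [hLam_def]; positivity
  have hccpos : 0 < cc := by rw [hcc_def]; exact one_div_pos.mpr (by linarith)
  have hccΛ : cc*Lam = 1/2 := by
    rw [hcc_def]; rw [div_mul_eq_mul_div, one_mul, div_eq_iff (by linarith : (2:ℝ)*Lam ≠ 0)]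
    ring
  -- Per-solution core facts
  have core : ∀ S I : ℝ → ℝ, IsSol r m β γ μ cSS cSI cIS cII a S I →
      ∀ b : ℝ, 0 < b → b ≤ alpha*ρ^2 →
      pC*(S 0 - Sp)^2 + 2*qC*((S 0 - Sp)*(I 0 - Ip)) + sC*(I 0 - Ip)^2 < b →
      ((∀ t : ℝ, 0 ≤ t →
        pC*(S t - Sp)^2 + 2*qC*((S t - Sp)*(I t - Ip)) + sC*(I t - Ip)^2 < b) ∧
       (∀ t : ℝ, 0 ≤ t →
        pC*(S t - Sp)^2 + 2*qC*((S t - Sp)*(I t - Ip)) + sC*(I t - Ip)^2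
          ≤ (pC*(S 0 - Sp)^2 + 2*qC*((S 0 - Sp)*(I 0 - Ip)) + sC*(I 0 - Ip)^2)
            * Real.exp (-(cc*t)))) := by
    intro S I hsol b hb hble hW0b
    obtain ⟨W, hW_def⟩ : ∃ W : ℝ → ℝ,
      W = fun t => pC*(S t - Sp)^2 + 2*qC*((S t - Sp)*(I t - Ip)) + sC*(I t - Ip)^2 :=
      ⟨_, rfl⟩
    have hW0b' : W 0 < b := by rw [hW_def]; exact hW0b
    have hWge : ∀ t : ℝ, alpha*((S t - Sp)^2 + (I t - Ip)^2) ≤ W t := by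
      intro t; rw [hW_def, halpha_def]; simp only []
      exact quad_lower pC qC sC (S t - Sp) (I t - Ip) hpC hsC
    have hWle : ∀ t : ℝ, W t ≤ Lam*((S t - Sp)^2 + (I t - Ip)^2) := by
      intro t; rw [hW_def, hLam_def]; simp only []
      exact quad_upper pC qC sC (S t - Sp) (I t - Ip) hpC hsC
    have hWnonneg : ∀ t : ℝ, 0 ≤ W t := by
      intro t
      exact le_trans (mul_nonneg hαpos.le (by positivity)) (hWge t)
    have hWder : ∀ t : ℝ, 0 ≤ t → HasDerivAt W
        (2*(pC*(S t - Sp)+qC*(I t - Ip))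
            *(a11*(S t - Sp) + a12*(I t - Ip)
              + (-(cSS*(S t - Sp)^2) - (cSI+β)*((S t - Sp)*(I t - Ip))))
          + 2*(qC*(S t - Sp)+sC*(I t - Ip))
            *(a21*(S t - Sp) + a22*(I t - Ip)
              + ((β-cIS)*((S t - Sp)*(I t - Ip)) - cII*(I t - Ip)^2))) t := by
      intro t ht
      obtain ⟨hS, hI⟩ := hsol t ht
      rw [hW_def]
      have := hasDerivAt_W pC qC sC Sp Ip S I _ _ t hS hI
      rwa [hshift1 (S t) (I t), hshift2 (S t) (I t)] at this
    have hWd_le : ∀ t : ℝ, 0 ≤ t → (S t - Sp)^2 + (I t - Ip)^2 ≤ ρ^2 →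
        (2*(pC*(S t - Sp)+qC*(I t - Ip))
            *(a11*(S t - Sp) + a12*(I t - Ip)
              + (-(cSS*(S t - Sp)^2) - (cSI+β)*((S t - Sp)*(I t - Ip))))
          + 2*(qC*(S t - Sp)+sC*(I t - Ip))
            *(a21*(S t - Sp) + a22*(I t - Ip)
              + ((β-cIS)*((S t - Sp)*(I t - Ip)) - cII*(I t - Ip)^2)))
          ≤ -(cc * W t) := by
      intro t ht hn2
      have hcub := cubic_bound pC qC sC cSS cSI β cIS cII ρ (S t - Sp) (I t - Ip)
        hpC hsC hcSS hcSI hβ hcIS hβc hcII hρ hMρ hn2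
      have hly := hlyap (S t - Sp) (I t - Ip)
      have hWl := hWle t
      have hccW : cc * W t ≤ 1/2*((S t - Sp)^2 + (I t - Ip)^2) := by
        have h1 : cc * W t ≤ cc * (Lam*((S t - Sp)^2 + (I t - Ip)^2)) :=
          mul_le_mul_of_nonneg_left hWl hccpos.le
        calc cc * W t ≤ cc * (Lam*((S t - Sp)^2 + (I t - Ip)^2)) := h1
          _ = (cc*Lam)*((S t - Sp)^2 + (I t - Ip)^2) := by ring
          _ = 1/2*((S t - Sp)^2 + (I t - Ip)^2) := by rw [hccΛ]
      calc (2*(pC*(S t - Sp)+qC*(I t - Ip))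
            *(a11*(S t - Sp) + a12*(I t - Ip)
              + (-(cSS*(S t - Sp)^2) - (cSI+β)*((S t - Sp)*(I t - Ip))))
          + 2*(qC*(S t - Sp)+sC*(I t - Ip))
            *(a21*(S t - Sp) + a22*(I t - Ip)
              + ((β-cIS)*((S t - Sp)*(I t - Ip)) - cII*(I t - Ip)^2)))
          = (2*(pC*(S t - Sp)+qC*(I t - Ip))*(a11*(S t - Sp) + a12*(I t - Ip))
              + 2*(qC*(S t - Sp)+sC*(I t - Ip))*(a21*(S t - Sp) + a22*(I t - Ip)))
            + (2*(pC*(S t - Sp)+qC*(I t - Ip))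
                *(-(cSS*(S t - Sp)^2) - (cSI+β)*((S t - Sp)*(I t - Ip)))
              + 2*(qC*(S t - Sp)+sC*(I t - Ip))
                *((β-cIS)*((S t - Sp)*(I t - Ip)) - cII*(I t - Ip)^2)) := by ring
        _ = -((S t - Sp)^2 + (I t - Ip)^2)
            + (2*(pC*(S t - Sp)+qC*(I t - Ip))
                *(-(cSS*(S t - Sp)^2) - (cSI+β)*((S t - Sp)*(I t - Ip)))
              + 2*(qC*(S t - Sp)+sC*(I t - Ip))
                *((β-cIS)*((S t - Sp)*(I t - Ip)) - cII*(I t - Ip)^2)) := by rw [hly]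
        _ ≤ -((S t - Sp)^2 + (I t - Ip)^2) + 1/2*((S t - Sp)^2 + (I t - Ip)^2) := by
            linarith [hcub]
        _ = -(1/2*((S t - Sp)^2 + (I t - Ip)^2)) := by ring
        _ ≤ -(cc * W t) := by linarith [hccW]
    have hWcont : ∀ x : ℝ, 0 ≤ x → ContinuousAt W x := fun x hx => (hWder x hx).continuousAt
    have hinvAll : ∀ t : ℝ, 0 ≤ t → W t < b := by
      intro t ht
      by_contra hcon
      push_neg at hcon
      have hne : Set.Nonempty {x : ℝ | 0 ≤ x ∧ b ≤ W x} := ⟨t, ht, hcon⟩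
      have hbdd : BddBelow {x : ℝ | 0 ≤ x ∧ b ≤ W x} := ⟨0, fun x hx => hx.1⟩
      set T := sInf {x : ℝ | 0 ≤ x ∧ b ≤ W x} with hT_def
      have hT0 : 0 ≤ T := le_csInf hne (fun x hx => hx.1)
      have hWcont : ∀ x : ℝ, 0 ≤ x → ContinuousAt W x := fun x hx => (hWder x hx).continuousAt
      have hWT : b ≤ W T := by
        by_contra hWTlt
        push_neg at hWTlt
        have hcont := hWcont T hT0
        rw [Metric.continuousAt_iff] at hcont
        obtain ⟨η, hη, hball⟩ := hcont (b - W T) (by linarith)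
        obtain ⟨x, hxS, hxlt⟩ := (csInf_lt_iff hbdd hne).mp (show T < T + η by linarith)
        have hTx : T ≤ x := csInf_le hbdd hxS
        have hd : dist x T < η := by
          rw [Real.dist_eq, abs_of_nonneg (by linarith)]; linarith
        have := hball hd
        rw [Real.dist_eq] at this
        have hlt : W x < b := by
          rcases abs_lt.mp this with ⟨h1, h2⟩; linarith
        exact absurd hxS.2 (not_le.mpr hlt)
      have hTpos : 0 < T := by
        rcases hT0.lt_or_eq with h | h
        · exact h
        · exfalso; rw [← h] at hWT; linarith [hW0b']
      have hless : ∀ x : ℝ, 0 ≤ x → x < T → W x < b := by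
        intro x hx hxT
        by_contra hge
        push_neg at hge
        exact absurd (csInf_le hbdd ⟨hx, hge⟩) (not_le.mpr hxT)
      have hmono : AntitoneOn W (Set.Icc 0 T) := by
        apply antitoneOn_of_deriv_nonpos (convex_Icc 0 T)
        · exact fun x hx => (hWcont x hx.1).continuousWithinAt
        · intro x hx
          rw [interior_Icc] at hx
          exact ((hWder x hx.1.le).differentiableAt).differentiableWithinAt
        · intro x hx
          rw [interior_Icc] at hx
          have hx0 : 0 ≤ x := hx.1.le
          have hWx : W x < b := hless x hx0 hx.2
          have hn2 : (S x - Sp)^2 + (I x - Ip)^2 ≤ ρ^2 := by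
            have h1 := hWge x
            have h2 : alpha*((S x - Sp)^2 + (I x - Ip)^2) < alpha*ρ^2 :=
              lt_of_le_of_lt h1 (lt_of_lt_of_le hWx hble)
            exact le_of_lt ((mul_lt_mul_iff_right₀ hαpos).mp h2)
          have hd := hWd_le x hx0 hn2
          rw [(hWder x hx0).deriv]
          linarith [mul_nonneg hccpos.le (hWnonneg x)]
      have hfin : W T ≤ W 0 :=
        hmono (Set.mem_Icc.mpr ⟨le_refl 0, hT0⟩) (Set.mem_Icc.mpr ⟨hT0, le_refl T⟩) hT0
      linarith [hW0b', hWT, hfin]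

    refine ⟨fun t ht => by have h := hinvAll t ht; rw [hW_def] at h; exact h, ?_⟩
    -- exponential decay
    have hn2All : ∀ x : ℝ, 0 ≤ x → (S x - Sp)^2 + (I x - Ip)^2 ≤ ρ^2 := by
      intro x hx
      have h1 := hWge x
      have h2 : alpha*((S x - Sp)^2 + (I x - Ip)^2) < alpha*ρ^2 :=
        lt_of_le_of_lt h1 (lt_of_lt_of_le (hinvAll x hx) hble)
      exact le_of_lt ((mul_lt_mul_iff_right₀ hαpos).mp h2)
    have hG : ∀ x : ℝ, 0 ≤ x → HasDerivAt (fun τ => W τ * Real.exp (cc*τ))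
        ((2*(pC*(S x - Sp)+qC*(I x - Ip))
            *(a11*(S x - Sp) + a12*(I x - Ip)
              + (-(cSS*(S x - Sp)^2) - (cSI+β)*((S x - Sp)*(I x - Ip))))
          + 2*(qC*(S x - Sp)+sC*(I x - Ip))
            *(a21*(S x - Sp) + a22*(I x - Ip)
              + ((β-cIS)*((S x - Sp)*(I x - Ip)) - cII*(I x - Ip)^2))) * Real.exp (cc*x)
          + W x * (Real.exp (cc*x) * (cc*1))) x := by
      intro x hx
      exact (hWder x hx).mul (((hasDerivAt_id x).const_mul cc).exp)
    have hGmono : AntitoneOn (fun τ => W τ * Real.exp (cc*τ)) (Set.Ici 0) := by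
      apply antitoneOn_of_deriv_nonpos (convex_Ici 0)
      · exact fun x hx => ((hWcont x hx).mul
          (Real.continuous_exp.comp (continuous_const.mul continuous_id)).continuousAt).continuousWithinAt
      · intro x hx
        rw [interior_Ici] at hx
        exact (hG x (le_of_lt hx)).differentiableAt.differentiableWithinAt
      · intro x hx
        rw [interior_Ici] at hx
        have hx0 : 0 ≤ x := hx.le
        have hd := hWd_le x hx0 (hn2All x hx0)
        rw [(hG x hx0).deriv]
        have hW0x := hWnonneg x
        have hepos := Real.exp_pos (cc*x)
        set E := (2*(pC*(S x - Sp)+qC*(I x - Ip))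
            *(a11*(S x - Sp) + a12*(I x - Ip)
              + (-(cSS*(S x - Sp)^2) - (cSI+β)*((S x - Sp)*(I x - Ip))))
          + 2*(qC*(S x - Sp)+sC*(I x - Ip))
            *(a21*(S x - Sp) + a22*(I x - Ip)
              + ((β-cIS)*((S x - Sp)*(I x - Ip)) - cII*(I x - Ip)^2))) with hE_def
        have h1 : E + cc * W x ≤ 0 := by linarith [hd]
        have h2 : (E + cc * W x) * Real.exp (cc*x) ≤ 0 * Real.exp (cc*x) :=
          mul_le_mul_of_nonneg_right h1 hepos.le
        rw [zero_mul] at h2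
        linarith [h2]
    intro t ht
    have h0 : W t * Real.exp (cc*t) ≤ W 0 * Real.exp (cc*0) :=
      hGmono (Set.mem_Ici.mpr le_rfl) (Set.mem_Ici.mpr ht) ht
    rw [mul_zero, Real.exp_zero, mul_one] at h0
    have hepos := Real.exp_pos (cc*t)
    have hgoal : W t ≤ W 0 * Real.exp (-(cc*t)) := by
      rw [show Real.exp (-(cc*t)) = (Real.exp (cc*t))⁻¹ from Real.exp_neg _,
        ← div_eq_mul_inv, le_div_iff₀ hepos]
      exact h0
    rw [hW_def] at hgoal
    exact hgoal
  constructor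
  · -- stability
    intro ε hε
    have hρ'pos : 0 < min ε ρ := lt_min hε hρ
    have hbpos : 0 < alpha * (min ε ρ)^2 := mul_pos hαpos (pow_pos hρ'pos 2)
    have hargpos : 0 < alpha*(min ε ρ)^2/(2*Lam) := div_pos hbpos (by linarith)
    refine ⟨Real.sqrt (alpha*(min ε ρ)^2/(2*Lam)), Real.sqrt_pos.mpr hargpos, ?_⟩
    intro S I hsol hdist t ht
    rw [Prod.dist_eq] at hdist
    rcases max_lt_iff.mp hdist with ⟨hd1, hd2⟩
    rw [Real.dist_eq] at hd1 hd2
    have hδ2 : (Real.sqrt (alpha*(min ε ρ)^2/(2*Lam)))^2 = alpha*(min ε ρ)^2/(2*Lam) :=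
      Real.sq_sqrt hargpos.le
    have hu0 : (S 0 - Sp)^2 < alpha*(min ε ρ)^2/(2*Lam) := by
      rcases abs_lt.mp hd1 with ⟨h1, h2⟩
      have := sq_lt_sq' h1 h2
      rwa [hδ2] at this
    have hv0 : (I 0 - Ip)^2 < alpha*(min ε ρ)^2/(2*Lam) := by
      rcases abs_lt.mp hd2 with ⟨h1, h2⟩
      have := sq_lt_sq' h1 h2
      rwa [hδ2] at this
    have hW0 : pC*(S 0 - Sp)^2 + 2*qC*((S 0 - Sp)*(I 0 - Ip)) + sC*(I 0 - Ip)^2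
        < alpha*(min ε ρ)^2 := by
      have h1 := quad_upper pC qC sC (S 0 - Sp) (I 0 - Ip) hpC hsC
      have h2 : (S 0 - Sp)^2 + (I 0 - Ip)^2 < alpha*(min ε ρ)^2/Lam := by
        have : alpha*(min ε ρ)^2/(2*Lam) + alpha*(min ε ρ)^2/(2*Lam)
            = alpha*(min ε ρ)^2/Lam := by
          rw [← add_div, div_eq_div_iff (ne_of_gt (by linarith : (0:ℝ) < 2*Lam)) (ne_of_gt hΛpos)]
          ring
        linarith [hu0, hv0]
      have h3 : Lam*((S 0 - Sp)^2 + (I 0 - Ip)^2) < Lam*(alpha*(min ε ρ)^2/Lam) :=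
        (mul_lt_mul_iff_right₀ hΛpos).mpr h2
      have h4 : Lam*(alpha*(min ε ρ)^2/Lam) = alpha*(min ε ρ)^2 :=
        mul_div_cancel₀ _ (by linarith : Lam ≠ 0)
      rw [← hLam_def] at h1
      linarith [h1, h3, h4.le]
    have hble2 : alpha*(min ε ρ)^2 ≤ alpha*ρ^2 := by
      have : (min ε ρ)^2 ≤ ρ^2 := pow_le_pow_left₀ hρ'pos.le (min_le_right ε ρ) 2
      exact mul_le_mul_of_nonneg_left this hαpos.le
    have hinv := (core S I hsol (alpha*(min ε ρ)^2) hbpos hble2 hW0).1 t ht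
    have hn2 : (S t - Sp)^2 + (I t - Ip)^2 < (min ε ρ)^2 := by
      have h1 := quad_lower pC qC sC (S t - Sp) (I t - Ip) hpC hsC
      rw [← halpha_def] at h1
      exact (mul_lt_mul_iff_right₀ hαpos).mp (lt_of_le_of_lt h1 hinv)
    rw [Prod.dist_eq]
    apply max_lt
    · rw [Real.dist_eq]
      have h2 : (S t - Sp)^2 < (min ε ρ)^2 := by nlinarith [sq_nonneg (I t - Ip)]
      have h3 := Real.sqrt_lt_sqrt (sq_nonneg _) h2
      rw [Real.sqrt_sq_eq_abs, Real.sqrt_sq hρ'pos.le] at h3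
      exact lt_of_lt_of_le h3 (min_le_left ε ρ)
    · rw [Real.dist_eq]
      have h2 : (I t - Ip)^2 < (min ε ρ)^2 := by nlinarith [sq_nonneg (S t - Sp)]
      have h3 := Real.sqrt_lt_sqrt (sq_nonneg _) h2
      rw [Real.sqrt_sq_eq_abs, Real.sqrt_sq hρ'pos.le] at h3
      exact lt_of_lt_of_le h3 (min_le_left ε ρ)
  · -- attraction
    have hbpos : 0 < alpha * ρ^2 := mul_pos hαpos (pow_pos hρ 2)
    have hargpos : 0 < alpha*ρ^2/(2*Lam) := div_pos hbpos (by linarith)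
    refine ⟨Real.sqrt (alpha*ρ^2/(2*Lam)), Real.sqrt_pos.mpr hargpos, ?_⟩
    intro S I hsol hdist
    rw [Prod.dist_eq] at hdist
    rcases max_lt_iff.mp hdist with ⟨hd1, hd2⟩
    rw [Real.dist_eq] at hd1 hd2
    have hδ2 : (Real.sqrt (alpha*ρ^2/(2*Lam)))^2 = alpha*ρ^2/(2*Lam) :=
      Real.sq_sqrt hargpos.le
    have hu0 : (S 0 - Sp)^2 < alpha*ρ^2/(2*Lam) := by
      rcases abs_lt.mp hd1 with ⟨h1, h2⟩
      have := sq_lt_sq' h1 h2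
      rwa [hδ2] at this
    have hv0 : (I 0 - Ip)^2 < alpha*ρ^2/(2*Lam) := by
      rcases abs_lt.mp hd2 with ⟨h1, h2⟩
      have := sq_lt_sq' h1 h2
      rwa [hδ2] at this
    have hW0 : pC*(S 0 - Sp)^2 + 2*qC*((S 0 - Sp)*(I 0 - Ip)) + sC*(I 0 - Ip)^2
        < alpha*ρ^2 := by
      have h1 := quad_upper pC qC sC (S 0 - Sp) (I 0 - Ip) hpC hsC
      have h2 : (S 0 - Sp)^2 + (I 0 - Ip)^2 < alpha*ρ^2/Lam := by
        have : alpha*ρ^2/(2*Lam) + alpha*ρ^2/(2*Lam) = alpha*ρ^2/Lam := by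
          rw [← add_div, div_eq_div_iff (ne_of_gt (by linarith : (0:ℝ) < 2*Lam)) (ne_of_gt hΛpos)]
          ring
        linarith [hu0, hv0]
      have h3 : Lam*((S 0 - Sp)^2 + (I 0 - Ip)^2) < Lam*(alpha*ρ^2/Lam) :=
        (mul_lt_mul_iff_right₀ hΛpos).mpr h2
      have h4 : Lam*(alpha*ρ^2/Lam) = alpha*ρ^2 :=
        mul_div_cancel₀ _ (by linarith : Lam ≠ 0)
      rw [← hLam_def] at h1
      linarith [h1, h3, h4.le]
    have hdecay := (core S I hsol (alpha*ρ^2) hbpos le_rfl hW0).2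
    obtain ⟨W0, hW0_def⟩ : ∃ x : ℝ,
        x = pC*(S 0 - Sp)^2 + 2*qC*((S 0 - Sp)*(I 0 - Ip)) + sC*(I 0 - Ip)^2 := ⟨_, rfl⟩
    rw [← hW0_def] at hW0 hdecay
    have hW0nn : 0 ≤ W0 := by
      have h1 := quad_lower pC qC sC (S 0 - Sp) (I 0 - Ip) hpC hsC
      rw [← halpha_def] at h1
      have h2 : 0 ≤ alpha*((S 0 - Sp)^2 + (I 0 - Ip)^2) :=
        mul_nonneg hαpos.le (by positivity)
      rw [hW0_def]
      linarith [h1, h2]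
    have hlim : Tendsto (fun t : ℝ => Real.sqrt ((W0/alpha) * Real.exp (-(cc*t))))
        atTop (𝓝 0) := by
      have h1 : Tendsto (fun t : ℝ => cc*t) atTop atTop :=
        Tendsto.const_mul_atTop hccpos tendsto_id
      have h2 : Tendsto (fun t : ℝ => Real.exp (-(cc*t))) atTop (𝓝 0) := by
        rw [show (fun t : ℝ => Real.exp (-(cc*t)))
            = (fun x : ℝ => Real.exp (-x)) ∘ (fun t : ℝ => cc*t) from rfl]
        exact Real.tendsto_exp_neg_atTop_nhds_zero.comp h1
      have h3 : Tendsto (fun t : ℝ => (W0/alpha) * Real.exp (-(cc*t))) atTop (𝓝 0) := by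
        simpa using h2.const_mul (W0/alpha)
      have h4 := h3.sqrt
      simpa using h4
    have hkey : ∀ t : ℝ, 0 ≤ t → (S t - Sp)^2 + (I t - Ip)^2
        ≤ (W0/alpha) * Real.exp (-(cc*t)) := by
      intro t ht
      have h1 := quad_lower pC qC sC (S t - Sp) (I t - Ip) hpC hsC
      rw [← halpha_def] at h1
      have h2 := hdecay t ht
      have h3 : alpha * ((S t - Sp)^2 + (I t - Ip)^2) ≤ W0 * Real.exp (-(cc*t)) := by
        exact le_trans h1 h2
      rw [div_mul_eq_mul_div, le_div_iff₀ hαpos]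
      linarith [h3]
    have hSten : Tendsto (fun t => S t - Sp) atTop (𝓝 0) := by
      apply squeeze_zero_norm' _ hlim
      filter_upwards [eventually_ge_atTop (0:ℝ)] with t ht
      have h1 := hkey t ht
      have h2 : (S t - Sp)^2 ≤ (W0/alpha) * Real.exp (-(cc*t)) := by
        nlinarith [sq_nonneg (I t - Ip)]
      rw [Real.norm_eq_abs, ← Real.sqrt_sq_eq_abs]
      exact Real.sqrt_le_sqrt h2
    have hIten : Tendsto (fun t => I t - Ip) atTop (𝓝 0) := by
      apply squeeze_zero_norm' _ hlim
      filter_upwards [eventually_ge_atTop (0:ℝ)] with t ht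
      have h1 := hkey t ht
      have h2 : (I t - Ip)^2 ≤ (W0/alpha) * Real.exp (-(cc*t)) := by
        nlinarith [sq_nonneg (S t - Sp)]
      rw [Real.norm_eq_abs, ← Real.sqrt_sq_eq_abs]
      exact Real.sqrt_le_sqrt h2
    have hS : Tendsto S atTop (𝓝 Sp) := by
      have := hSten.add_const Sp
      simpa using this
    have hI : Tendsto I atTop (𝓝 Ip) := by
      have := hIten.add_const Ip
      simpa using this
    exact hS.prodMk_nhds hI


/-- Proposition 5 (existence, uniqueness and local stability): if `S1 > A`
there is exactly one interior equilibrium and it is locally asymptotically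
stable. -/
theorem prop5_interior_equilibrium
    (r m β γ μ cSS cSI cIS cII a : ℝ)
    (hp : ParamsPos r m β γ μ cSS cSI cIS cII a)
    (hrm : m < r) (hβc : cIS < β)
    (hSA : (m + γ + μ) / (β - cIS) < (r - m) / cSS) :
    ∃ Sp Ip : ℝ, 0 < Sp ∧ 0 < Ip ∧
      IsEquilibrium r m β γ μ cSS cSI cIS cII a Sp Ip ∧
      (∀ s i : ℝ, 0 < s → 0 < i →
        IsEquilibrium r m β γ μ cSS cSI cIS cII a s i → s = Sp ∧ i = Ip) ∧
      (∀ ε : ℝ, 0 < ε → ∃ δ : ℝ, 0 < δ ∧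
        ∀ S I : ℝ → ℝ, IsSol r m β γ μ cSS cSI cIS cII a S I →
          dist ((S 0, I 0) : ℝ × ℝ) (Sp, Ip) < δ →
          ∀ t : ℝ, 0 ≤ t → dist ((S t, I t) : ℝ × ℝ) (Sp, Ip) < ε) ∧
      (∃ δ₀ : ℝ, 0 < δ₀ ∧
        ∀ S I : ℝ → ℝ, IsSol r m β γ μ cSS cSI cIS cII a S I →
          dist ((S 0, I 0) : ℝ × ℝ) (Sp, Ip) < δ₀ →
          Tendsto (fun t => (S t, I t)) atTop (𝓝 ((Sp, Ip) : ℝ × ℝ))) := by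
  obtain ⟨hr, hm, hβ, hγ, hμ, hcSS, hcSI, hcIS, hcII, ha0, ha1⟩ := hp
  have hβc' : (0:ℝ) < β - cIS := by linarith
  obtain ⟨k, hk_def⟩ : ∃ x : ℝ, x = (β - cIS)/cII := ⟨_, rfl⟩
  have hk : 0 < k := hk_def ▸ div_pos hβc' hcII
  obtain ⟨A, hA_def⟩ : ∃ x : ℝ, x = (m+γ+μ)/(β-cIS) := ⟨_, rfl⟩
  have hA : 0 < A := hA_def ▸ div_pos (by linarith) hβc'
  have hkc : cII * k = β - cIS := by
    rw [hk_def, mul_div_cancel₀ _ (ne_of_gt hcII)]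
  have hAc : (β - cIS) * A = m + γ + μ := by
    rw [hA_def, mul_div_cancel₀ _ (ne_of_gt hβc')]
  have hAS1 : cSS * A < r - m := by
    have h2 : A < (r-m)/cSS := hA_def ▸ hSA
    have := (lt_div_iff₀ hcSS).mp h2
    linarith
  obtain ⟨L, hL_def⟩ : ∃ x : ℝ, x = cSS + k*(cSI+β) := ⟨_, rfl⟩
  have hL : 0 < L := by
    rw [hL_def]
    have : 0 < k*(cSI+β) := mul_pos hk (by linarith)
    linarith
  obtain ⟨Bq, hBq_def⟩ : ∃ x : ℝ, x = (r-m) + k*(a*r+γ) + k*A*(cSI+β) := ⟨_, rfl⟩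
  obtain ⟨Cq, hCq_def⟩ : ∃ x : ℝ, x = -(k*A*(a*r+γ)) := ⟨_, rfl⟩
  obtain ⟨D, hD_def⟩ : ∃ x : ℝ, x = Bq^2 + 4*L*Cq := ⟨_, rfl⟩
  have hFA_pos : 0 < A*((r-m) - cSS*A) := mul_pos hA (by linarith)
  have hD_eq : D = (2*L*A - Bq)^2 + 4*L*(A*((r-m) - cSS*A)) := by
    rw [hD_def, hBq_def, hCq_def, hL_def]; ring
  have hD_pos : 0 < D := by
    rw [hD_eq]
    linarith [sq_nonneg (2*L*A - Bq), mul_pos hL hFA_pos]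
  obtain ⟨sq, hsq_def⟩ : ∃ x : ℝ, x = Real.sqrt D := ⟨_, rfl⟩
  have hsq2 : sq^2 = D := by rw [hsq_def]; exact Real.sq_sqrt hD_pos.le
  have hsq_pos : 0 < sq := by rw [hsq_def]; exact Real.sqrt_pos.mpr hD_pos
  have habslt : |2*L*A - Bq| < sq := by
    have hlt : (2*L*A - Bq)^2 < sq^2 := by
      linarith [mul_pos hL hFA_pos, hsq2, hD_eq]
    have := Real.sqrt_lt_sqrt (sq_nonneg (2*L*A - Bq)) hlt
    rwa [Real.sqrt_sq_eq_abs, Real.sqrt_sq hsq_pos.le] at this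
  have hsq_gt1 : 2*L*A - Bq < sq :=
    lt_of_le_of_lt (le_abs_self _) habslt
  have hsq_gt2 : Bq - 2*L*A < sq := by
    have := neg_abs_le (2*L*A - Bq)
    linarith [habslt]
  obtain ⟨Sp, hSp_def⟩ : ∃ x : ℝ, x = (Bq + sq)/(2*L) := ⟨_, rfl⟩
  have h2LSp : 2*L*Sp = Bq + sq := by
    rw [hSp_def, mul_div_cancel₀ _ (ne_of_gt (by linarith : (0:ℝ) < 2*L))]
  have hSpA : A < Sp := by
    have hgt : 2*L*A < 2*L*Sp := by linarith [h2LSp, hsq_gt1]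
    exact (mul_lt_mul_iff_right₀ (by linarith : (0:ℝ) < 2*L)).mp hgt
  have hSp_pos : 0 < Sp := lt_trans hA hSpA
  obtain ⟨Ip, hIp_def⟩ : ∃ x : ℝ, x = k*(Sp - A) := ⟨_, rfl⟩
  have hIp_pos : 0 < Ip := hIp_def ▸ mul_pos hk (by linarith)
  have hroot : -(L*Sp^2) + Bq*Sp + Cq = 0 := by
    have h4L : 4*L*(-(L*Sp^2) + Bq*Sp + Cq) = 0 := by
      linear_combination (-(2*L*Sp - Bq) - sq) * h2LSp - hsq2 - hD_def
    have := mul_eq_zero.mp h4L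
    rcases this with h | h
    · exact absurd h (ne_of_gt (by linarith))
    · exact h
  have heq1 : r*Sp + a*r*Ip - m*Sp - (cSS*Sp + cSI*Ip)*Sp - β*Sp*Ip + γ*Ip = 0 := by
    rw [hIp_def]
    rw [hL_def, hBq_def, hCq_def] at hroot
    linear_combination hroot
  have heq2 : -(m*Ip) - (cIS*Sp + cII*Ip)*Ip + β*Sp*Ip - γ*Ip - μ*Ip = 0 := by
    rw [hIp_def]
    linear_combination (-(k*(Sp-A)*(Sp-A)))*hkc + (k*(Sp-A))*hAc
  have hrel : (β-cIS)*Sp - cII*Ip - (m+γ+μ) = 0 := by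
    have h0 : Ip * ((β-cIS)*Sp - cII*Ip - (m+γ+μ)) = 0 := by linear_combination heq2
    rcases mul_eq_zero.mp h0 with h | h
    · exact absurd h (ne_of_gt hIp_pos)
    · exact h
  have huniq : ∀ s i : ℝ, 0 < s → 0 < i →
      IsEquilibrium r m β γ μ cSS cSI cIS cII a s i → s = Sp ∧ i = Ip := by
    intro s i hs hi hEq
    obtain ⟨he1, he2⟩ := hEq
    have h0 : i * ((β-cIS)*s - cII*i - (m+γ+μ)) = 0 := by linear_combination he2
    have h1 : (β-cIS)*s - cII*i - (m+γ+μ) = 0 := by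
      rcases mul_eq_zero.mp h0 with h | h
      · exact absurd h (ne_of_gt hi)
      · exact h
    have h2 : cII*i = cII*(k*(s-A)) := by
      linear_combination (-1)*h1 + hAc + (-(s-A))*hkc
    have hi_eq : i = k*(s-A) := mul_left_cancel₀ (ne_of_gt hcII) h2
    have hsA : A < s := by
      by_contra hc
      push_neg at hc
      have : k*(s-A) ≤ 0 := mul_nonpos_of_nonneg_of_nonpos hk.le (by linarith)
      linarith [hi_eq ▸ hi]
    rw [hi_eq] at he1
    have hroots : -(L*s^2) + Bq*s + Cq = 0 := by
      rw [hL_def, hBq_def, hCq_def]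
      linear_combination he1
    have hfact : (2*L*s - Bq - sq)*(2*L*s - Bq + sq) = 0 := by
      linear_combination (-(4*L))*hroots - hsq2 - hD_def
    rcases mul_eq_zero.mp hfact with h | h
    · have h3 : 2*L*s = 2*L*Sp := by linarith [h2LSp]
      have hs_eq : s = Sp := mul_left_cancel₀ (ne_of_gt (by linarith : (0:ℝ) < 2*L)) h3
      exact ⟨hs_eq, by rw [hi_eq, hs_eq, ← hIp_def]⟩
    · exfalso
      linarith [hsq_gt2, h, mul_pos hL (sub_pos.mpr hsA)]
  -- Jacobian entries
  obtain ⟨a11, ha11_def⟩ : ∃ x : ℝ, x = r - m - 2*cSS*Sp - (cSI+β)*Ip := ⟨_, rfl⟩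
  obtain ⟨a12, ha12_def⟩ : ∃ x : ℝ, x = a*r + γ - (cSI+β)*Sp := ⟨_, rfl⟩
  obtain ⟨a21, ha21_def⟩ : ∃ x : ℝ, x = (β-cIS)*Ip := ⟨_, rfl⟩
  obtain ⟨a22, ha22_def⟩ : ∃ x : ℝ, x = -(cII*Ip) := ⟨_, rfl⟩
  have hSpa11 : Sp*a11 = -((a*r+γ)*Ip) - cSS*Sp^2 := by
    rw [ha11_def]; linear_combination heq1
  have ha11_neg : a11 < 0 := by
    by_contra hc
    push_neg at hc
    have h1 : 0 ≤ Sp*a11 := mul_nonneg hSp_pos.le hc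
    linarith [hSpa11, mul_pos (mul_pos ha0 hr) hIp_pos,
      mul_pos hγ hIp_pos, mul_pos hcSS (mul_pos hSp_pos hSp_pos)]
  have ha22_neg : a22 < 0 := by
    rw [ha22_def]; linarith [mul_pos hcII hIp_pos]
  have htr : a11 + a22 < 0 := by linarith
  have ha11k : a11 + k*a12 = Bq - 2*L*Sp := by
    rw [ha11_def, ha12_def, hBq_def, hL_def, hIp_def]; ring
  have hdet_eq : a11*a22 - a12*a21 = cII*Ip*sq := by
    rw [ha22_def, ha21_def]
    linear_combination (Ip*a12)*hkc + (-(cII*Ip))*ha11k + (cII*Ip)*h2LSp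
  have hdet : 0 < a11*a22 - a12*a21 := by
    rw [hdet_eq]; exact mul_pos (mul_pos hcII hIp_pos) hsq_pos
  -- shifted vector field identities
  have hshift1 : ∀ Sx Ix : ℝ, r*Sx + a*r*Ix - m*Sx - (cSS*Sx + cSI*Ix)*Sx - β*Sx*Ix + γ*Ix
      = a11*(Sx-Sp) + a12*(Ix-Ip)
        + (-(cSS*(Sx-Sp)^2) - (cSI+β)*((Sx-Sp)*(Ix-Ip))) := by
    intro Sx Ix
    rw [ha11_def, ha12_def]
    linear_combination heq1
  have hshift2 : ∀ Sx Ix : ℝ, -(m*Ix) - (cIS*Sx + cII*Ix)*Ix + β*Sx*Ix - γ*Ix - μ*Ix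
      = a21*(Sx-Sp) + a22*(Ix-Ip)
        + ((β-cIS)*((Sx-Sp)*(Ix-Ip)) - cII*(Ix-Ip)^2) := by
    intro Sx Ix
    rw [ha21_def, ha22_def]
    linear_combination heq2 + (Ix - Ip)*hrel
  -- Lyapunov matrix
  obtain ⟨Xv, hX_def⟩ : ∃ x : ℝ, x = a22^2+(a11*a22-a12*a21)+a21^2 := ⟨_, rfl⟩
  obtain ⟨Yv, hY_def⟩ : ∃ x : ℝ, x = a11^2+(a11*a22-a12*a21)+a12^2 := ⟨_, rfl⟩
  obtain ⟨pC, hpC_def⟩ : ∃ x : ℝ, x = Xv/(-(2*(a11*a22-a12*a21)*(a11+a22))) := ⟨_, rfl⟩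
  obtain ⟨sC, hsC_def⟩ : ∃ x : ℝ, x = Yv/(-(2*(a11*a22-a12*a21)*(a11+a22))) := ⟨_, rfl⟩
  obtain ⟨qC, hqC_def⟩ : ∃ x : ℝ,
      x = (a12*Xv+a21*Yv)/(2*(a11*a22-a12*a21)*(a11+a22)^2) := ⟨_, rfl⟩
  have hXpos : 0 < Xv := by rw [hX_def]; linarith [sq_nonneg a22, sq_nonneg a21, hdet]
  have hYpos : 0 < Yv := by rw [hY_def]; linarith [sq_nonneg a11, sq_nonneg a12, hdet]
  have hdenpos : 0 < -(2*(a11*a22-a12*a21)*(a11+a22)) := by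
    linarith [mul_pos hdet (neg_pos.mpr htr)]
  have hpC : 0 < pC := hpC_def ▸ div_pos hXpos hdenpos
  have hsC : 0 < sC := hsC_def ▸ div_pos hYpos hdenpos
  have hlyap : ∀ u v : ℝ,
      2*(pC*u+qC*v)*(a11*u+a12*v) + 2*(qC*u+sC*v)*(a21*u+a22*v) = -(u^2+v^2) := by
    intro u v
    rw [hpC_def, hsC_def, hqC_def, hX_def, hY_def]
    exact lyap_id a11 a12 a21 a22 u v htr hdet
  have htau2 : 0 < (a11+a22)^2 := by
    have := mul_pos (neg_pos.mpr htr) (neg_pos.mpr htr)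
    linarith [this, sq_nonneg (a11+a22)]
  have hq2 : qC^2 < pC*sC := by
    have hkey : pC*sC - qC^2
        = ((a11+a22)^2+(a12-a21)^2)/(4*(a11*a22-a12*a21)*(a11+a22)^2) := by
      rw [hpC_def, hsC_def, hqC_def, hX_def, hY_def]
      have h1 : a11*a22-a12*a21 ≠ 0 := ne_of_gt hdet
      have h2 : a11+a22 ≠ 0 := ne_of_lt htr
      have h3 : a22*a11 - a12*a21 ≠ 0 := by rwa [mul_comm a22]
      field_simp
      ring
    have hpos : 0 < ((a11+a22)^2+(a12-a21)^2)/(4*(a11*a22-a12*a21)*(a11+a22)^2) := by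
      apply div_pos
      · linarith [sq_nonneg (a12-a21), htau2]
      · linarith [mul_pos hdet htau2]
    rw [← hkey] at hpos
    linarith
  -- nonlinear-bound radius
  obtain ⟨Mv, hM_def⟩ : ∃ x : ℝ,
      x = 2*((pC + |qC|)*(cSS+(cSI+β)) + (|qC| + sC)*(β+cII)) := ⟨_, rfl⟩
  have hMpos : 0 < Mv := by
    rw [hM_def]
    have t1 : 0 < pC + |qC| := by linarith [abs_nonneg qC]
    have t2 : 0 < |qC| + sC := by linarith [abs_nonneg qC]
    linarith [mul_pos t1 (show (0:ℝ) < cSS+(cSI+β) by linarith),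
      mul_pos t2 (show (0:ℝ) < β+cII by linarith)]
  obtain ⟨ρv, hρ_def⟩ : ∃ x : ℝ, x = 1/(2*(Mv+1)) := ⟨_, rfl⟩
  have hρpos : 0 < ρv := by rw [hρ_def]; exact one_div_pos.mpr (by linarith)
  have hMρ : ρv * (2*((pC + |qC|)*(cSS+(cSI+β)) + (|qC| + sC)*(β+cII))) ≤ 1/2 := by
    rw [← hM_def, hρ_def, div_mul_eq_mul_div, one_mul,
      div_le_iff₀ (by linarith : (0:ℝ) < 2*(Mv+1))]
    linarith
  have hmaster := master r m β γ μ cSS cSI cIS cII a Sp Ip a11 a12 a21 a22 pC qC sC ρv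
    hcSS hcSI hβ hcIS hβc hcII hpC hsC hq2 hρpos hshift1 hshift2 hlyap hMρ
  exact ⟨Sp, Ip, hSp_pos, hIp_pos, ⟨heq1, heq2⟩, huniq, hmaster.1, hmaster.2⟩
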